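/- arXiv:2412.08989 — 5 statements merged into one kernel-verified Lean document; each statement's English description precedes it below -/
import Mathlib

section
/- Let U₁,…,U₈ be an interleaved double chain of words with |U₁| ≥ |U₂| + |U₄|. Then there exist words W₁ and W₅ such that U₁ = U₆⁻¹ W₁ U₄⁻¹ and U₅ = U₂⁻¹ W₅ U₈⁻¹, and the chain W₅⁻¹ : U₂ : U₃ : U₄ : W₁⁻¹ : U₆ : U₇ : U₈ is again an interleaved double chain. -/
/-- Letterwise reversal of a word over an alphabet with reversal `inv`. -/
def wrev {A : Type*} (inv : A → A) (W : List A) : List A := (W.map inv).reverse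

/-- An interleaved double chain (indices mod 8). -/
def IDC {A : Type*} (inv : A → A) (U : ZMod 8 → List A) : Prop :=
  ∀ i : ZMod 8, U i ++ U (i + 1) = wrev inv (U (i + 4) ++ U (i + 5))

private lemma split_pref {α : Type*} {a b c d : List α} (h : a ++ b = c ++ d)
    (hle : a.length ≤ c.length) : ∃ e, c = a ++ e ∧ b = e ++ d := by
  rcases List.append_eq_append_iff.mp h with ⟨e, h1, h2⟩ | ⟨e, h1, h2⟩
  · exact ⟨e, h1, h2⟩
  · have : e = [] := by
      have := congrArg List.length h1
      simp at this
      exact List.eq_nil_of_length_eq_zero (by omega)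
    subst this
    exact ⟨[], by simpa using h1.symm, by simpa using h2.symm⟩

theorem stmt1 {A : Type*} (inv : A → A) (hinv : Function.Involutive inv)
    (U : ZMod 8 → List A) (hU : IDC inv U)
    (hlen : (U 2).length + (U 4).length ≤ (U 1).length) :
    ∃ W₁ W₅ : List A,
      U 1 = wrev inv (U 6) ++ W₁ ++ wrev inv (U 4) ∧
      U 5 = wrev inv (U 2) ++ W₅ ++ wrev inv (U 8) ∧
      IDC inv (fun i : ZMod 8 =>
        if i = 1 then wrev inv W₅ else if i = 5 then wrev inv W₁ else U i) := by
  have wa : ∀ X Y : List A, wrev inv (X ++ Y) = wrev inv Y ++ wrev inv X := by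
    intro X Y; simp [wrev]
  have ww : ∀ X : List A, wrev inv (wrev inv X) = X := by
    intro X; simp [wrev, List.map_reverse, List.map_map, hinv.comp_self]
  have wl : ∀ X : List A, (wrev inv X).length = X.length := by
    intro X; simp [wrev]
  have e0 : U 0 ++ U 1 = wrev inv (U 5) ++ wrev inv (U 4) := by
    have := hU 0; rwa [wa] at this
  have e1 : U 1 ++ U 2 = wrev inv (U 6) ++ wrev inv (U 5) := by
    have := hU 1; rwa [wa] at this
  have e2 : U 2 ++ U 3 = wrev inv (U 7) ++ wrev inv (U 6) := by
    have := hU 2; rwa [wa] at this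
  have e3 : U 3 ++ U 4 = wrev inv (U 0) ++ wrev inv (U 7) := by
    have := hU 3; rwa [wa] at this
  have l0 := congrArg List.length e0
  have l1 := congrArg List.length e1
  have l2 := congrArg List.length e2
  have l3 := congrArg List.length e3
  simp only [List.length_append, wl] at l0 l1 l2 l3
  obtain ⟨Y, hY1, hY2⟩ : ∃ Y, wrev inv (U 5) = U 0 ++ Y ∧ U 1 = Y ++ wrev inv (U 4) :=
    split_pref e0 (by rw [wl]; omega)
  have hYlen : Y.length = (U 1).length - (U 4).length := by
    have := congrArg List.length hY2; simp only [List.length_append, wl] at this; omega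
  have e1' : wrev inv (U 6) ++ wrev inv (U 5) = Y ++ (wrev inv (U 4) ++ U 2) := by
    rw [← e1, hY2, List.append_assoc]
  obtain ⟨W₁, hW1a, hW1b⟩ : ∃ W₁, Y = wrev inv (U 6) ++ W₁ ∧
      wrev inv (U 5) = W₁ ++ (wrev inv (U 4) ++ U 2) :=
    split_pref e1' (by rw [wl]; omega)
  have hW1len : W₁.length = (U 1).length - (U 4).length - (U 2).length := by
    have := congrArg List.length hW1a; simp only [List.length_append, wl] at this; omega
  -- two expressions for U 5
  have u5a : U 5 = wrev inv W₁ ++ U 6 ++ wrev inv (U 0) := by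
    have : U 5 = wrev inv (wrev inv (U 5)) := (ww _).symm
    rw [this, hY1, hW1a, wa, wa, ww, List.append_assoc]
  have u5b : U 5 = wrev inv (U 2) ++ (U 4 ++ wrev inv W₁) := by
    have : U 5 = wrev inv (wrev inv (U 5)) := (ww _).symm
    rw [this, hW1b, wa, wa, ww, List.append_assoc]
  have hq : wrev inv (U 2) ++ (U 4 ++ wrev inv W₁) = (wrev inv W₁ ++ U 6) ++ wrev inv (U 0) := by
    rw [← u5b, u5a]
  obtain ⟨W₅, hb, ha⟩ : ∃ W₅, wrev inv W₁ ++ U 6 = wrev inv (U 2) ++ W₅ ∧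
      U 4 ++ wrev inv W₁ = W₅ ++ wrev inv (U 0) :=
    split_pref hq (by simp only [List.length_append, wl]; omega)
  refine ⟨W₁, W₅, ?_, ?_, ?_⟩
  · rw [hY2, hW1a, List.append_assoc]
  · show U 5 = wrev inv (U 2) ++ W₅ ++ wrev inv (U 0)
    rw [u5b, ha, ← List.append_assoc]
  · intro i
    fin_cases i
    · show U 0 ++ wrev inv W₅ = wrev inv (U 4 ++ wrev inv W₁)
      rw [ha, wa, ww]
    · show wrev inv W₅ ++ U 2 = wrev inv (wrev inv W₁ ++ U 6)
      rw [hb, wa, ww]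
    · exact hU 2
    · exact hU 3
    · show U 4 ++ wrev inv W₁ = wrev inv (U 0 ++ wrev inv W₅)
      rw [wa, ww, ha]
    · show wrev inv W₁ ++ U 6 = wrev inv (wrev inv W₅ ++ U 2)
      rw [wa, ww, hb]
    · exact hU 6
    · exact hU 7
end

section
/- If U = U₁:…:U₈ is an interleaved double chain of words, then its f₁-lift V, defined by V₁ = U₆⁻¹U₅⁻¹U₄⁻¹, V₅ = U₂⁻¹U₁⁻¹U₈⁻¹, and V_j = U_j for j ∈ {2,3,4,6,7,8}, is again an interleaved double chain. -/
/-- The `f₁`-lift: `V₁ = U₆⁻¹U₅⁻¹U₄⁻¹`, `V₅ = U₂⁻¹U₁⁻¹U₈⁻¹`, other parts unchanged. -/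
def f1lift {A : Type*} (inv : A → A) (U : ZMod 8 → List A) : ZMod 8 → List A :=
  fun j =>
    if j = 1 then wrev inv (U 6) ++ wrev inv (U 5) ++ wrev inv (U 4)
    else if j = 5 then wrev inv (U 2) ++ wrev inv (U 1) ++ wrev inv (U 8)
    else U j

lemma wrev_append {A : Type*} (inv : A → A) (a b : List A) :
    wrev inv (a ++ b) = wrev inv b ++ wrev inv a := by
  simp [wrev]

lemma wrev_wrev {A : Type*} {inv : A → A} (h : Function.Involutive inv) (W : List A) :
    wrev inv (wrev inv W) = W := by
  simp [wrev, List.map_reverse, List.map_map, h.comp_self]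

theorem stmt2 {A : Type*} (inv : A → A) (hinv : Function.Involutive inv)
    (U : ZMod 8 → List A) (hU : IDC inv U) :
    IDC inv (f1lift inv U) := by
  have h0 := hU 0
  have h1 := hU 1
  have h2 := hU 2
  have h3 := hU 3
  have h4 := hU 4
  have h5 := hU 5
  have h6 := hU 6
  have h7 := hU 7
  simp only [wrev_append,
    (show ((8:ZMod 8)) = 0 by decide), (show ((9:ZMod 8)) = 1 by decide),
    (show ((10:ZMod 8)) = 2 by decide), (show ((11:ZMod 8)) = 3 by decide),
    (show ((12:ZMod 8)) = 4 by decide),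
    (show ((0:ZMod 8)+1) = 1 by decide), (show ((0:ZMod 8)+4) = 4 by decide),
    (show ((0:ZMod 8)+5) = 5 by decide), (show ((1:ZMod 8)+1) = 2 by decide),
    (show ((1:ZMod 8)+4) = 5 by decide), (show ((1:ZMod 8)+5) = 6 by decide),
    (show ((2:ZMod 8)+1) = 3 by decide), (show ((2:ZMod 8)+4) = 6 by decide),
    (show ((2:ZMod 8)+5) = 7 by decide), (show ((3:ZMod 8)+1) = 4 by decide),
    (show ((3:ZMod 8)+4) = 7 by decide), (show ((3:ZMod 8)+5) = 0 by decide),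
    (show ((4:ZMod 8)+1) = 5 by decide), (show ((4:ZMod 8)+4) = 0 by decide),
    (show ((4:ZMod 8)+5) = 1 by decide), (show ((5:ZMod 8)+1) = 6 by decide),
    (show ((5:ZMod 8)+4) = 1 by decide), (show ((5:ZMod 8)+5) = 2 by decide),
    (show ((6:ZMod 8)+1) = 7 by decide), (show ((6:ZMod 8)+4) = 2 by decide),
    (show ((6:ZMod 8)+5) = 3 by decide), (show ((7:ZMod 8)+1) = 0 by decide),
    (show ((7:ZMod 8)+4) = 3 by decide), (show ((7:ZMod 8)+5) = 4 by decide)]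
    at h0 h1 h2 h3 h4 h5 h6 h7
  have f1 : f1lift inv U 0 = U 0 := by
    rw [f1lift]; rw [if_neg (by decide), if_neg (by decide)]
  have f2 : f1lift inv U 1 = wrev inv (U 6) ++ wrev inv (U 5) ++ wrev inv (U 4) := by
    rw [f1lift]; rw [if_pos rfl]
  have f3 : f1lift inv U 2 = U 2 := by
    rw [f1lift]; rw [if_neg (by decide), if_neg (by decide)]
  have f4 : f1lift inv U 3 = U 3 := by
    rw [f1lift]; rw [if_neg (by decide), if_neg (by decide)]
  have f5 : f1lift inv U 4 = U 4 := by
    rw [f1lift]; rw [if_neg (by decide), if_neg (by decide)]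
  have f6 : f1lift inv U 5 = wrev inv (U 2) ++ wrev inv (U 1) ++ wrev inv (U 0) := by
    rw [f1lift]; rw [if_neg (by decide), if_pos rfl,
      (show ((8:ZMod 8)) = 0 by decide)]
  have f7 : f1lift inv U 6 = U 6 := by
    rw [f1lift]; rw [if_neg (by decide), if_neg (by decide)]
  have f8 : f1lift inv U 7 = U 7 := by
    rw [f1lift]; rw [if_neg (by decide), if_neg (by decide)]
  have g0 : f1lift inv U 0 ++ f1lift inv U 1 = wrev inv (f1lift inv U 4 ++ f1lift inv U 5) := by
    simp only [f1, f2, f5, f6, wrev_append, wrev_wrev hinv, List.append_assoc]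
    congr 1
    rw [← List.append_assoc, ← List.append_assoc, ← h1]
  have g1 : f1lift inv U 1 ++ f1lift inv U 2 = wrev inv (f1lift inv U 5 ++ f1lift inv U 6) := by
    simp only [f2, f3, f6, f7, wrev_append, wrev_wrev hinv, List.append_assoc]
    congr 1
    rw [← List.append_assoc, ← List.append_assoc, ← h0]
  have g2 : f1lift inv U 2 ++ f1lift inv U 3 = wrev inv (f1lift inv U 6 ++ f1lift inv U 7) := by
    simp only [f3, f4, f7, f8, wrev_append]
    exact h2
  have g3 : f1lift inv U 3 ++ f1lift inv U 4 = wrev inv (f1lift inv U 7 ++ f1lift inv U 0) := by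
    simp only [f4, f5, f8, f1, wrev_append]
    exact h3
  have g4 : f1lift inv U 4 ++ f1lift inv U 5 = wrev inv (f1lift inv U 0 ++ f1lift inv U 1) := by
    simp only [f5, f6, f1, f2, wrev_append, wrev_wrev hinv, List.append_assoc]
    congr 1
    rw [← List.append_assoc, ← List.append_assoc, h5]
  have g5 : f1lift inv U 5 ++ f1lift inv U 6 = wrev inv (f1lift inv U 1 ++ f1lift inv U 2) := by
    simp only [f6, f7, f2, f3, wrev_append, wrev_wrev hinv, List.append_assoc]
    congr 1
    rw [← List.append_assoc, ← List.append_assoc, h4]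
  have g6 : f1lift inv U 6 ++ f1lift inv U 7 = wrev inv (f1lift inv U 2 ++ f1lift inv U 3) := by
    simp only [f7, f8, f4, f3, wrev_append]
    exact h6
  have g7 : f1lift inv U 7 ++ f1lift inv U 0 = wrev inv (f1lift inv U 3 ++ f1lift inv U 4) := by
    simp only [f8, f1, f5, f4, wrev_append]
    exact h7
  intro i
  fin_cases i
  · exact g0
  · exact g1
  · exact g2
  · exact g3
  · exact g4
  · exact g5
  · exact g6
  · exact g7
end

section
/- Let V = V₁:…:V₈ be an interleaved double chain in the free group 𝔉 generated by an alphabet A (each V_i a positive word, i.e. a product of generators) whose type (b₁,b₂,b₃,b₄) with b_i = |V_i| = |V_{i+4}| satisfies b₁ ≤ b₂ + b₄. Then the free-group element Z₁ = V₄⁻¹ · neg(V₁) · V₆⁻¹ is again a positive word, where neg denotes the group inverse in 𝔉 and W⁻¹ denotes letterwise reversal of a word. -/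
/-- Embedding of (positive) words into the free group on the alphabet. -/
def toF {A : Type*} (W : List A) : FreeGroup A := (W.map FreeGroup.of).prod

theorem stmt4 {A : Type*} (inv : A → A) (hinv : Function.Involutive inv)
    (V : ZMod 8 → List A) (hV : IDC inv V)
    (hlen : (V 1).length ≤ (V 2).length + (V 4).length) :
    ∃ Z : List A,
      toF (wrev inv (V 4)) * (toF (V 1))⁻¹ * toF (wrev inv (V 6)) = toF Z := by
  clear hinv
  -- length relations
  have len : ∀ i : ZMod 8, (V i).length + (V (i+1)).length
      = (V (i+5)).length + (V (i+4)).length := by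
    intro i
    have := congrArg List.length (hV i)
    simpa [wrev] using this
  have L0 := len 0
  have L1 := len 1
  have L2 := len 2
  have L3 := len 3
  have L4 := len 4
  have L5 := len 5
  have L6 := len 6
  have L7 := len 7
  simp only [show (0+1:ZMod 8)=1 by decide, show (0+4:ZMod 8)=4 by decide,
    show (0+5:ZMod 8)=5 by decide, show (1+1:ZMod 8)=2 by decide,
    show (1+4:ZMod 8)=5 by decide, show (1+5:ZMod 8)=6 by decide,
    show (2+1:ZMod 8)=3 by decide, show (2+4:ZMod 8)=6 by decide,
    show (2+5:ZMod 8)=7 by decide, show (3+1:ZMod 8)=4 by decide,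
    show (3+4:ZMod 8)=7 by decide, show (3+5:ZMod 8)=0 by decide,
    show (4+1:ZMod 8)=5 by decide, show (4+4:ZMod 8)=0 by decide,
    show (4+5:ZMod 8)=1 by decide, show (5+1:ZMod 8)=6 by decide,
    show (5+4:ZMod 8)=1 by decide, show (5+5:ZMod 8)=2 by decide,
    show (6+1:ZMod 8)=7 by decide, show (6+4:ZMod 8)=2 by decide,
    show (6+5:ZMod 8)=3 by decide, show (7+1:ZMod 8)=0 by decide,
    show (7+4:ZMod 8)=3 by decide, show (7+5:ZMod 8)=4 by decide]
    at L0 L1 L2 L3 L4 L5 L6 L7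
  have b51 : (V 5).length = (V 1).length := by omega
  have b62 : (V 6).length = (V 2).length := by omega
  have b40 : (V 4).length = (V 0).length := by omega
  -- the two chain relations we need
  have R0 : V 0 ++ V 1 = wrev inv (V 5) ++ wrev inv (V 4) := by
    have := hV 0
    simp only [show (0+1:ZMod 8)=1 by decide, show (0+4:ZMod 8)=4 by decide,
      show (0+5:ZMod 8)=5 by decide, wrev, List.map_append, List.reverse_append] at this
    simpa [wrev] using this
  have R1 : V 1 ++ V 2 = wrev inv (V 6) ++ wrev inv (V 5) := by
    have := hV 1
    simp only [show (1+1:ZMod 8)=2 by decide, show (1+4:ZMod 8)=5 by decide,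
      show (1+5:ZMod 8)=6 by decide, wrev, List.map_append, List.reverse_append] at this
    simpa [wrev] using this
  have lw6 : (wrev inv (V 6)).length = (V 2).length := by simp [wrev, b62]
  have lw5 : (wrev inv (V 5)).length = (V 1).length := by simp [wrev, b51]
  have lw4 : (wrev inv (V 4)).length = (V 0).length := by simp [wrev, b40]
  rcases le_or_gt (V 1).length (wrev inv (V 6)).length with hc | hc
  · -- V 1 is a prefix of wrev inv (V 6)
    have hpre : wrev inv (V 6) = V 1 ++ (wrev inv (V 6)).drop (V 1).length := by
      conv_lhs => rw [← List.take_append_drop (V 1).length (wrev inv (V 6))]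
      congr 1
      calc List.take (V 1).length (wrev inv (V 6))
          = List.take (V 1).length (wrev inv (V 6) ++ wrev inv (V 5)) :=
            (List.take_append_of_le_length hc).symm
        _ = List.take (V 1).length (V 1 ++ V 2) := by rw [← R1]
        _ = V 1 := List.take_left
    refine ⟨wrev inv (V 4) ++ (wrev inv (V 6)).drop (V 1).length, ?_⟩
    rw [hpre]
    simp [toF, List.prod_append, mul_assoc]
  · -- wrev inv (V 6) is a prefix of V 1
    set S := (V 1).drop (wrev inv (V 6)).length with hS
    have hA : V 1 = wrev inv (V 6) ++ S := by
      conv_lhs => rw [← List.take_append_drop (wrev inv (V 6)).length (V 1)]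
      congr 1
      calc List.take (wrev inv (V 6)).length (V 1)
          = List.take (wrev inv (V 6)).length (V 1 ++ V 2) :=
            (List.take_append_of_le_length hc.le).symm
        _ = List.take (wrev inv (V 6)).length (wrev inv (V 6) ++ wrev inv (V 5)) := by rw [R1]
        _ = wrev inv (V 6) := List.take_left
    have hSlen : S.length = (V 1).length - (V 2).length := by
      simp [hS, lw6]
    have hle : (V 1).length ≤ (V 0).length + (wrev inv (V 6)).length := by omega
    have hB : wrev inv (V 4) = (V 0 ++ wrev inv (V 6)).drop (V 1).length ++ S := by
      have key : (V 0 ++ wrev inv (V 6)) ++ S = wrev inv (V 5) ++ wrev inv (V 4) := by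
        rw [List.append_assoc, ← hA, R0]
      have := congrArg (List.drop (wrev inv (V 5)).length) key
      rw [List.drop_left, lw5,
        List.drop_append_of_le_length (by simpa using hle)] at this
      exact this.symm
    refine ⟨(V 0 ++ wrev inv (V 6)).drop (V 1).length, ?_⟩
    rw [hB, hA]
    simp [toF, List.prod_append, mul_assoc]
end

section
/- Let U be an interleaved double chain of words with type (a₁,a₂,a₃,a₄). Then the composite transform g*_Odd = g_Odd ∘ f_Even is total: the f_Even-lift V = f₂(f₄(U)) has type (b₁,b₂,b₃,b₄) with b_i = a_i for odd i and b_i = a_{i−1}+a_i+a_{i+1} for even i, which satisfies b_i ≤ b_{i−1}+b_{i+1} for all odd i and b₁+b₃ ≤ b₂+b₄; hence g_Odd(f_Even(U)) is well defined and is a g_Odd-lift. -/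
/-- The `f_k`-lift: for `j ≡ k (mod 4)` replace `U_j` by `(U_{j+3}U_{j+4}U_{j+5})⁻¹`,
and keep the remaining parts. -/
def flift {A : Type*} (inv : A → A) (k : ZMod 8) (U : ZMod 8 → List A) :
    ZMod 8 → List A :=
  fun j =>
    if j = k ∨ j = k + 4 then wrev inv (U (j + 3) ++ U (j + 4) ++ U (j + 5)) else U j

/-- The `f_Even`-lift `V = f₂(f₄(U))` of an interleaved double chain has type
`b_i = a_i` for odd `i` and `b_i = a_{i-1} + a_i + a_{i+1}` for even `i`, and this
type satisfies `b_i ≤ b_{i-1} + b_{i+1}` for all odd `i` and `b₁ + b₃ ≤ b₂ + b₄`;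
hence `g_Odd(f_Even(U))` is well defined and is a `g_Odd`-lift. -/
theorem stmt13 {A : Type*} (inv : A → A) (hinv : Function.Involutive inv)
    (U : ZMod 8 → List A) (hU : IDC inv U) :
    ∀ V : ZMod 8 → List A, V = flift inv 2 (flift inv 4 U) →
      (∀ i : ZMod 8, i = 1 ∨ i = 3 ∨ i = 5 ∨ i = 7 →
        (V i).length = (U i).length) ∧
      (∀ i : ZMod 8, i = 0 ∨ i = 2 ∨ i = 4 ∨ i = 6 →
        (V i).length = (U (i - 1)).length + (U i).length + (U (i + 1)).length) ∧
      (∀ i : ZMod 8, i = 1 ∨ i = 3 ∨ i = 5 ∨ i = 7 →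
        (V i).length ≤ (V (i - 1)).length + (V (i + 1)).length) ∧
      (V 1).length + (V 3).length ≤ (V 2).length + (V 4).length := by
  intro V hV
  subst hV
  have key : ∀ i : ZMod 8,
      (U i).length + (U (i + 1)).length = (U (i + 4)).length + (U (i + 5)).length := by
    intro i
    have h := congrArg List.length (hU i)
    simp [wrev] at h
    omega
  have k0 : (U 0).length + (U 1).length = (U 4).length + (U 5).length := by
    simpa using key 0
  have k1 : (U 1).length + (U 2).length = (U 5).length + (U 6).length := by
    simpa [show (((1:ZMod 8)+1) = 2) from by decide, show (((1:ZMod 8)+4) = 5) from by decide,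
      show (((1:ZMod 8)+5) = 6) from by decide] using key 1
  have k2 : (U 2).length + (U 3).length = (U 6).length + (U 7).length := by
    simpa [show (((2:ZMod 8)+1) = 3) from by decide, show (((2:ZMod 8)+4) = 6) from by decide,
      show (((2:ZMod 8)+5) = 7) from by decide] using key 2
  have k3 : (U 3).length + (U 4).length = (U 7).length + (U 0).length := by
    simpa [show (((3:ZMod 8)+1) = 4) from by decide, show (((3:ZMod 8)+4) = 7) from by decide,
      show (((3:ZMod 8)+5) = 0) from by decide] using key 3
  have v0 : ((flift inv 2 (flift inv 4 U)) 0).length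
      = (U 3).length + (U 4).length + (U 5).length := by
    simp (config := { decide := true }) [flift, wrev,
      show ((0:ZMod 8)+3 = 3) from by decide, show ((0:ZMod 8)+4 = 4) from by decide,
      show ((0:ZMod 8)+5 = 5) from by decide]
    omega
  have v2 : ((flift inv 2 (flift inv 4 U)) 2).length
      = (U 5).length + (U 6).length + (U 7).length := by
    simp (config := { decide := true }) [flift, wrev,
      show ((2:ZMod 8)+3 = 5) from by decide, show ((2:ZMod 8)+4 = 6) from by decide,
      show ((2:ZMod 8)+5 = 7) from by decide]
    omega
  have v4 : ((flift inv 2 (flift inv 4 U)) 4).length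
      = (U 7).length + (U 0).length + (U 1).length := by
    simp (config := { decide := true }) [flift, wrev,
      show ((4:ZMod 8)+3 = 7) from by decide, show ((4:ZMod 8)+4 = 0) from by decide,
      show ((4:ZMod 8)+5 = 1) from by decide]
    omega
  have v6 : ((flift inv 2 (flift inv 4 U)) 6).length
      = (U 1).length + (U 2).length + (U 3).length := by
    simp (config := { decide := true }) [flift, wrev,
      show ((6:ZMod 8)+3 = 1) from by decide, show ((6:ZMod 8)+4 = 2) from by decide,
      show ((6:ZMod 8)+5 = 3) from by decide]
    omega
  have v1 : ((flift inv 2 (flift inv 4 U)) 1).length = (U 1).length := by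
    simp (config := { decide := true }) [flift]
  have v3 : ((flift inv 2 (flift inv 4 U)) 3).length = (U 3).length := by
    simp (config := { decide := true }) [flift]
  have v5 : ((flift inv 2 (flift inv 4 U)) 5).length = (U 5).length := by
    simp (config := { decide := true }) [flift]
  have v7 : ((flift inv 2 (flift inv 4 U)) 7).length = (U 7).length := by
    simp (config := { decide := true }) [flift]
  refine ⟨?_, ?_, ?_, ?_⟩
  · rintro i (rfl | rfl | rfl | rfl)
    exacts [v1, v3, v5, v7]
  · rintro i (rfl | rfl | rfl | rfl)
    · rw [show ((0:ZMod 8) - 1 = 7) from by decide, show ((0:ZMod 8) + 1 = 1) from by decide,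
        v0]
      omega
    · rw [show ((2:ZMod 8) - 1 = 1) from by decide, show ((2:ZMod 8) + 1 = 3) from by decide,
        v2]
      omega
    · rw [show ((4:ZMod 8) - 1 = 3) from by decide, show ((4:ZMod 8) + 1 = 5) from by decide,
        v4]
      omega
    · rw [show ((6:ZMod 8) - 1 = 5) from by decide, show ((6:ZMod 8) + 1 = 7) from by decide,
        v6]
      omega
  · rintro i (rfl | rfl | rfl | rfl)
    · rw [show ((1:ZMod 8) - 1 = 0) from by decide, show ((1:ZMod 8) + 1 = 2) from by decide,
        v1, v0, v2]
      omega
    · rw [show ((3:ZMod 8) - 1 = 2) from by decide, show ((3:ZMod 8) + 1 = 4) from by decide,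
        v3, v2, v4]
      omega
    · rw [show ((5:ZMod 8) - 1 = 4) from by decide, show ((5:ZMod 8) + 1 = 6) from by decide,
        v5, v4, v6]
      omega
    · rw [show ((7:ZMod 8) - 1 = 6) from by decide, show ((7:ZMod 8) + 1 = 0) from by decide,
        v7, v6, v0]
      omega
  · rw [v1, v3, v2, v4]
    omega
end

section
/- Let L = L₁:…:L₈ be an interleaved double chain (a loop) whose type (ℓ₁,ℓ₂,ℓ₃,ℓ₄) satisfies ℓ₁+ℓ₃ = ℓ₂+ℓ₄ and ℓ₁ = max ℓ_i. Then there exist words A, B, C with |A| = ℓ₂−ℓ₃, |B| = ℓ₃, |C| = ℓ₄−ℓ₃ such that L₁ = ABC, L₂ = B⁻¹A, L₃ = B, L₄ = C⁻¹B⁻¹, L₅ = A⁻¹BC⁻¹, L₆ = B⁻¹A⁻¹, L₇ = B, L₈ = CB⁻¹. -/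
lemma splitL {A : Type*} {X Y U V : List A} (h : X ++ Y = U ++ V)
    (hle : U.length ≤ X.length) : ∃ W, X = U ++ W ∧ V = W ++ Y := by
  have hU : X.take U.length = U := by
    have h' := congrArg (List.take U.length) h
    rwa [List.take_append_of_le_length hle, List.take_left] at h'
  have hX : X = U ++ X.drop U.length := by
    conv_lhs => rw [← List.take_append_drop U.length X]
    rw [hU]
  refine ⟨X.drop U.length, hX, ?_⟩
  have h2 : U ++ (X.drop U.length ++ Y) = U ++ V := by
    rw [← List.append_assoc, ← hX]; exact h
  exact (List.append_cancel_left h2).symm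

theorem stmt14 {A : Type*} (inv : A → A) (hinv : Function.Involutive inv)
    (L : ZMod 8 → List A) (hL : IDC inv L)
    (hloop : (L 1).length + (L 3).length = (L 2).length + (L 4).length)
    (hmax2 : (L 2).length ≤ (L 1).length)
    (hmax3 : (L 3).length ≤ (L 1).length)
    (hmax4 : (L 4).length ≤ (L 1).length) :
    ∃ Aw Bw Cw : List A,
      Aw.length = (L 2).length - (L 3).length ∧
      Bw.length = (L 3).length ∧
      Cw.length = (L 4).length - (L 3).length ∧
      L 1 = Aw ++ Bw ++ Cw ∧
      L 2 = wrev inv Bw ++ Aw ∧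
      L 3 = Bw ∧
      L 4 = wrev inv Cw ++ wrev inv Bw ∧
      L 5 = wrev inv Aw ++ Bw ++ wrev inv Cw ∧
      L 6 = wrev inv Bw ++ wrev inv Aw ∧
      L 7 = Bw ∧
      L 8 = Cw ++ wrev inv Bw := by
  have wa : ∀ X Y : List A, wrev inv (X ++ Y) = wrev inv Y ++ wrev inv X := by
    intro X Y; simp [wrev]
  have ww : ∀ X : List A, wrev inv (wrev inv X) = X := by
    intro X; simp [wrev, List.map_reverse, List.map_map, hinv.comp_self]
  have wl : ∀ X : List A, (wrev inv X).length = X.length := by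
    intro X; simp [wrev]
  have h0 : L 0 ++ L 1 = wrev inv (L 4 ++ L 5) := hL 0
  have h1 : L 1 ++ L 2 = wrev inv (L 5 ++ L 6) := hL 1
  have h2 : L 2 ++ L 3 = wrev inv (L 6 ++ L 7) := hL 2
  have h3 : L 3 ++ L 4 = wrev inv (L 7 ++ L 0) := hL 3
  rw [wa] at h0 h1 h2 h3
  -- length bookkeeping
  have len0 := congrArg List.length h0
  have len1 := congrArg List.length h1
  have len2 := congrArg List.length h2
  have len3 := congrArg List.length h3
  simp only [List.length_append, wl] at len0 len1 len2 len3
  have hl5 : (L 5).length = (L 1).length := by omega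
  have hl7 : (L 7).length = (L 3).length := by omega
  -- Step A : split L 2
  obtain ⟨Aw, hA1, hA2⟩ := splitL h2 (by rw [wl]; omega)
  have lenA := congrArg List.length hA1
  simp only [List.length_append, wl] at lenA
  -- Step B : split L 4
  obtain ⟨D, hD1, hD2⟩ := splitL h3.symm (by rw [wl]; omega)
  have lenD := congrArg List.length hD2
  simp only [List.length_append, wl] at lenD
  -- Step C : split L 1 using h1
  rw [hA2, List.append_assoc] at h1
  obtain ⟨E, hE1, hE2⟩ := splitL h1 (by omega)
  -- Step D : split wrev (L 5) using h0
  have h0' : wrev inv (L 5) ++ (L 7 ++ wrev inv D) =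
      (wrev inv D ++ wrev inv (L 3)) ++ L 1 := by
    have e0 : L 0 = wrev inv D ++ wrev inv (L 3) := by
      rw [← ww (L 0), hD1, wa]
    have e4 : wrev inv (L 4) = L 7 ++ wrev inv D := by
      rw [hD2, wa, ww]
    rw [← e4, ← e0]; exact h0.symm
  obtain ⟨F, hF1, hF2⟩ := splitL h0' (by simp only [List.length_append, wl]; omega)
  -- Step E : F = Aw
  have lenF := congrArg List.length hF1
  simp only [List.length_append, wl] at lenF
  have hFA : Aw = F ∧ E = L 7 ++ wrev inv D := by
    have := hE1.symm.trans hF2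
    exact List.append_inj this (by omega)
  obtain ⟨hFA, hE⟩ := hFA
  -- Step F : L 7 = L 3
  have h73 : L 3 = L 7 := by
    have key : (L 3 ++ (wrev inv D ++ wrev inv (L 3))) ++ Aw =
        (L 7 ++ (wrev inv D ++ wrev inv (L 7))) ++ Aw := by
      have e5 : wrev inv (L 5) = (wrev inv D ++ wrev inv (L 3)) ++ Aw := by
        rw [hF1, hFA]
      have := hE2
      rw [hA1, hE, e5] at this
      simpa [List.append_assoc] using this
    have key2 := List.append_cancel_right key
    exact (List.append_inj key2 hl7.symm).1
  -- assemble
  refine ⟨Aw, L 3, wrev inv D, ?_, rfl, ?_, ?_, ?_, rfl, ?_, ?_, ?_, h73.symm, ?_⟩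
  · omega
  · rw [wl]; omega
  · rw [hE1, hE, ← h73, List.append_assoc]
  · rw [hA1, ← h73]
  · rw [hD2, ww, ← h73]
  · rw [← ww (L 5), hF1, hFA, wa, wa, ww, ww, List.append_assoc]
  · rw [← ww (L 6), hA2, wa]
  · show L 0 = wrev inv D ++ wrev inv (L 3)
    rw [← ww (L 0), hD1, wa]
end
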